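/- Let K ⊆ ℝⁿ be a Borel measurable set and r ≥ 0 such that γ(B_r) = γ(K), where B_r is the origin-centered Euclidean ball of radius r. Then the total convex influence satisfies TInf[K] ≤ TInf[B_r]. -/

import Mathlib

open MeasureTheory ProbabilityTheory Real

/-- The standard Gaussian measure `N(0,1)^n` on `Fin n → ℝ`. -/
noncomputable def stdGaussian (n : ℕ) : Measure (Fin n → ℝ) :=
  Measure.pi fun _ => gaussianReal 0 1

/-- The 0/1 indicator function of a set. -/
noncomputable def ind {n : ℕ} (K : Set (Fin n → ℝ)) (x : Fin n → ℝ) : ℝ :=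
  Set.indicator K (fun _ => (1:ℝ)) x

/-- The convex influence of direction `v` on `K`:
`Inf_v[K] = E_{x ∼ N(0,1)^n}[K(x) · (1 - (v·x)²)/√2]`. -/
noncomputable def convInf {n : ℕ} (K : Set (Fin n → ℝ)) (v : Fin n → ℝ) : ℝ :=
  ∫ x, ind K x * ((1 - (∑ i, v i * x i)^2) / Real.sqrt 2) ∂(stdGaussian n)

/-- Total convex influence, defined as the sum of coordinate influences. -/
noncomputable def convTInf {n : ℕ} (K : Set (Fin n → ℝ)) : ℝ :=
  ∑ i : Fin n, convInf K (fun j => if j = i then 1 else 0)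

/-- Total convex influence in integral form:
`TInf[K] = E_{x ∼ N(0,1)^n}[K(x) · (n - ‖x‖²)/√2]`. -/
noncomputable def convTInfI {n : ℕ} (K : Set (Fin n → ℝ)) : ℝ :=
  ∫ x, ind K x * (((n : ℝ) - ∑ i, (x i)^2) / Real.sqrt 2) ∂(stdGaussian n)

/-- Gaussian volume `γ(K)` under `N(0,1)^n`. -/
noncomputable def gvol {n : ℕ} (K : Set (Fin n → ℝ)) : ℝ :=
  (stdGaussian n K).toReal

/-- Variance of the indicator of `K` under the standard Gaussian: `γ(K)(1-γ(K))`. -/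
noncomputable def gvar {n : ℕ} (K : Set (Fin n → ℝ)) : ℝ :=
  gvol K * (1 - gvol K)

lemma map_eval_stdGaussian (n : ℕ) (i : Fin n) :
    (stdGaussian n).map (Function.eval i) = gaussianReal 0 1 := by
  refine Measure.ext fun s hs => ?_
  rw [Measure.map_apply (measurable_pi_apply i) hs]
  have h : Function.eval i ⁻¹' s
      = Set.pi Set.univ (Function.update (fun _ => (Set.univ : Set ℝ)) i s) :=
    Set.eval_preimage
  rw [h, _root_.stdGaussian, Measure.pi_pi]
  rw [Finset.prod_eq_single i (fun j _ hj => by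
    simp [Function.update_of_ne hj]) (by simp)]
  simp

lemma integrable_sq_gaussian : Integrable (fun y : ℝ => y ^ 2) (gaussianReal 0 1) := by
  rw [gaussianReal_of_var_ne_zero 0 one_ne_zero,
    integrable_withDensity_iff (measurable_gaussianPDF 0 1)
      (ae_of_all _ fun x => ENNReal.ofReal_lt_top)]
  have base := integrable_rpow_mul_exp_neg_mul_sq (b := (1:ℝ)/2) one_half_pos
    (s := 2) (by norm_num)
  have := base.const_mul ((Real.sqrt (2 * π))⁻¹)
  refine this.congr (Filter.EventuallyEq.of_eq (funext fun x => ?_))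
  rw [gaussianPDF, ENNReal.toReal_ofReal (gaussianPDFReal_nonneg _ _ _)]
  rw [gaussianPDFReal]
  rw [Real.rpow_two]
  push_cast
  ring_nf

instance stdGaussian_prob (n : ℕ) : IsProbabilityMeasure (stdGaussian n) := by
  unfold _root_.stdGaussian; infer_instance

lemma ind_nonneg {n : ℕ} (K : Set (Fin n → ℝ)) (x : Fin n → ℝ) : 0 ≤ ind K x := by
  unfold ind Set.indicator; split_ifs <;> norm_num

lemma ind_le_one {n : ℕ} (K : Set (Fin n → ℝ)) (x : Fin n → ℝ) : ind K x ≤ 1 := by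
  unfold ind Set.indicator; split_ifs <;> norm_num

lemma measurable_ind {n : ℕ} {K : Set (Fin n → ℝ)} (h : MeasurableSet K) :
    Measurable (ind K) := measurable_const.indicator h

lemma integrable_f (n : ℕ) :
    Integrable (fun x : Fin n → ℝ => ((n : ℝ) - ∑ i, (x i)^2) / Real.sqrt 2)
      (stdGaussian n) := by
  have hi : ∀ i : Fin n, Integrable (fun x : Fin n → ℝ => (x i)^2) (stdGaussian n) := by
    intro i
    have hg : Integrable (fun y : ℝ => y ^ 2) ((stdGaussian n).map (Function.eval i)) := by
      rw [map_eval_stdGaussian]; exact integrable_sq_gaussian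
    exact (integrable_map_measure
      ((measurable_id.pow_const 2).aestronglyMeasurable)
      (measurable_pi_apply i).aemeasurable).mp hg
  have hS : Integrable (fun x : Fin n → ℝ => ∑ i, (x i)^2) (stdGaussian n) :=
    integrable_finset_sum _ fun i _ => hi i
  exact ((integrable_const ((n:ℝ))).sub hS).div_const _


/-- Among all measurable sets of a given Gaussian volume, the centered ball
maximizes the total convex influence. -/
theorem stmt8 (n : ℕ) (K : Set (Fin n → ℝ)) (hmeas : MeasurableSet K)
    (r : ℝ) (hr : 0 ≤ r)
    (hvol : stdGaussian n {x | ∑ i, (x i) ^ 2 ≤ r ^ 2} = stdGaussian n K) :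
    convTInfI K ≤ convTInfI {x : Fin n → ℝ | ∑ i, (x i) ^ 2 ≤ r ^ 2} := by
  set μ := stdGaussian n with hμ
  set B : Set (Fin n → ℝ) := {x | ∑ i, (x i) ^ 2 ≤ r ^ 2} with hB
  have hBmeas : MeasurableSet B :=
    measurableSet_le (Finset.measurable_sum _ fun i _ => (measurable_pi_apply i).pow_const 2)
      measurable_const
  set f : (Fin n → ℝ) → ℝ := fun x => ((n : ℝ) - ∑ i, (x i)^2) / Real.sqrt 2 with hf
  set c : ℝ := ((n : ℝ) - r ^ 2) / Real.sqrt 2 with hc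
  have hfint : Integrable f μ := integrable_f n
  have hcint : Integrable (fun x => f x - c) μ := hfint.sub (integrable_const c)
  have hbd : ∀ (S : Set (Fin n → ℝ)), ∃ C : ℝ, ∀ x, ‖ind S x - ind B x‖ ≤ C := by
    intro S
    refine ⟨2, fun x => ?_⟩
    have h1 := ind_nonneg S x; have h2 := ind_le_one S x
    have h3 := ind_nonneg B x; have h4 := ind_le_one B x
    rw [Real.norm_eq_abs, abs_le]; constructor <;> linarith
  have hm : ∀ (S : Set (Fin n → ℝ)), MeasurableSet S →
      AEStronglyMeasurable (fun x => ind S x - ind B x) μ :=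
    fun S hS => ((measurable_ind hS).sub (measurable_ind hBmeas)).aestronglyMeasurable
  -- pointwise inequality
  have hpt : ∀ x, 0 ≤ (ind B x - ind K x) * (f x - c) := by
    intro x
    have hsqrt : (0:ℝ) < Real.sqrt 2 := Real.sqrt_pos.2 (by norm_num)
    by_cases hx : x ∈ B
    · have h1 : ind B x = 1 := by simp [ind, Set.indicator_of_mem hx]
      have h2 : ind K x ≤ 1 := ind_le_one K x
      have h3 : (0:ℝ) ≤ f x - c := by
        rw [hf, hc, div_sub_div_same, le_div_iff₀ hsqrt]
        have : ∑ i, (x i) ^ 2 ≤ r ^ 2 := hx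
        linarith
      nlinarith
    · have h1 : ind B x = 0 := by simp [ind, Set.indicator_of_notMem hx]
      have h2 : 0 ≤ ind K x := ind_nonneg K x
      have h3 : f x - c ≤ 0 := by
        rw [hf, hc, div_sub_div_same, div_nonpos_iff]
        right
        constructor
        · have : ¬ (∑ i, (x i) ^ 2 ≤ r ^ 2) := hx
          linarith
        · exact le_of_lt hsqrt
      nlinarith
  -- integrable products
  have hKf : Integrable (fun x => ind K x * f x) μ :=
    hfint.bdd_mul (measurable_ind hmeas).aestronglyMeasurable (c := 1)
      (ae_of_all _ fun x => by rw [Real.norm_eq_abs, abs_of_nonneg (ind_nonneg K x)]; exact ind_le_one K x)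
  have hBf : Integrable (fun x => ind B x * f x) μ :=
    hfint.bdd_mul (measurable_ind hBmeas).aestronglyMeasurable (c := 1)
      (ae_of_all _ fun x => by rw [Real.norm_eq_abs, abs_of_nonneg (ind_nonneg B x)]; exact ind_le_one B x)
  have hdiff : Integrable (fun x => (ind B x - ind K x) * (f x - c)) μ :=
    hcint.bdd_mul ((measurable_ind hBmeas).sub (measurable_ind hmeas)).aestronglyMeasurable (c := 2)
      (ae_of_all _ fun x => by
        have h1 := ind_nonneg K x; have h2 := ind_le_one K x
        have h3 := ind_nonneg B x; have h4 := ind_le_one B x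
        rw [Real.norm_eq_abs, abs_le]; constructor <;> linarith)
  -- measure equality in real form
  have hmeq : (μ B).toReal = (μ K).toReal := by rw [hμ, hvol]
  have hindB : ∫ x, ind B x ∂μ = (μ B).toReal := by
    simp [ind, integral_indicator_const (1:ℝ) hBmeas, Measure.real]
  have hindK : ∫ x, ind K x ∂μ = (μ K).toReal := by
    simp [ind, integral_indicator_const (1:ℝ) hmeas, Measure.real]
  have hindBi : Integrable (ind K) μ := (integrable_const (1:ℝ)).indicator hmeas
  have hindBi' : Integrable (ind B) μ := (integrable_const (1:ℝ)).indicator hBmeas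
  -- main computation
  have key : 0 ≤ ∫ x, (ind B x - ind K x) * f x ∂μ := by
    have hsplit : (fun x => (ind B x - ind K x) * f x)
        = fun x => (ind B x - ind K x) * (f x - c) + (ind B x * c - ind K x * c) := by
      funext x; ring
    have hint2 : Integrable (fun x => ind B x * c - ind K x * c) μ :=
      (hindBi'.mul_const c).sub (hindBi.mul_const c)
    rw [hsplit, integral_add hdiff hint2]
    have h1 : 0 ≤ ∫ x, (ind B x - ind K x) * (f x - c) ∂μ :=
      integral_nonneg hpt
    have h2 : ∫ x, (ind B x * c - ind K x * c) ∂μ = 0 := by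
      rw [integral_sub (hindBi'.mul_const c) (hindBi.mul_const c),
        integral_mul_const, integral_mul_const, hindB, hindK, hmeq]
      ring
    linarith
  have hfin : ∫ x, (ind B x - ind K x) * f x ∂μ
      = (∫ x, ind B x * f x ∂μ) - ∫ x, ind K x * f x ∂μ := by
    rw [← integral_sub hBf hKf]
    congr 1; funext x; ring
  rw [hfin] at key
  unfold convTInfI
  rw [← hμ]
  linarith
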